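/- Conservativity of fresh-individual assertions in ELH: Let K = (T, A) be an ELH knowledge base, y an individual name not occurring in A, and B an ELH concept. Then for every concept assertion or role assertion φ in which y does not occur, (T, A ∪ {B(y)}) ⊨ φ if and only if (T, A) ⊨ φ. -/

import Mathlib

namespace ELH

/-- ELH concept descriptions over concept names `NC` and role names `NR`. -/
inductive Concept (NC NR : Type) : Type
  | top : Concept NC NR
  | atom : NC → Concept NC NR
  | inter : Concept NC NR → Concept NC NR → Concept NC NR
  | ex : NR → Concept NC NR → Concept NC NR

/-- TBox axioms: concept inclusions and role inclusions. -/
inductive TAxiom (NC NR : Type) : Type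
  | cIncl : Concept NC NR → Concept NC NR → TAxiom NC NR
  | rIncl : NR → NR → TAxiom NC NR

/-- ABox axioms: concept assertions `C(x)` and role assertions `r(x,y)`. -/
inductive Assertion (NC NR NI : Type) : Type
  | cAssert : Concept NC NR → NI → Assertion NC NR NI
  | rAssert : NR → NI → NI → Assertion NC NR NI

/-- An interpretation with nonempty domain, obeying the unique-name assumption. -/
structure Interp (NC NR NI : Type) where
  Dom : Type
  dom_nonempty : Nonempty Dom
  cSem : NC → Set Dom
  rSem : NR → Set (Dom × Dom)
  iSem : NI → Dom
  una : Function.Injective iSem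

/-- Semantics of concepts. -/
def Concept.sem {NC NR NI : Type} (I : Interp NC NR NI) : Concept NC NR → Set I.Dom
  | .top => Set.univ
  | .atom A => I.cSem A
  | .inter c d => c.sem I ∩ d.sem I
  | .ex r c => {a | ∃ b, (a, b) ∈ I.rSem r ∧ b ∈ c.sem I}

/-- Satisfaction of a TBox axiom. -/
def Interp.satT {NC NR NI : Type} (I : Interp NC NR NI) : TAxiom NC NR → Prop
  | .cIncl c d => c.sem I ⊆ d.sem I
  | .rIncl r s => I.rSem r ⊆ I.rSem s

/-- Satisfaction of an ABox axiom. -/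
def Interp.satA {NC NR NI : Type} (I : Interp NC NR NI) : Assertion NC NR NI → Prop
  | .cAssert c x => I.iSem x ∈ c.sem I
  | .rAssert r x y => (I.iSem x, I.iSem y) ∈ I.rSem r

/-- A knowledge base: a TBox and an ABox. -/
structure KB (NC NR NI : Type) where
  tbox : Set (TAxiom NC NR)
  abox : Set (Assertion NC NR NI)

/-- `I` is a model of `K`. -/
def Interp.isModel {NC NR NI : Type} (I : Interp NC NR NI) (K : KB NC NR NI) : Prop :=
  (∀ ax ∈ K.tbox, I.satT ax) ∧ (∀ ax ∈ K.abox, I.satA ax)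

/-- `K ⊨ ax` for an ABox assertion `ax`. -/
def KB.entails {NC NR NI : Type} (K : KB NC NR NI) (ax : Assertion NC NR NI) : Prop :=
  ∀ I : Interp NC NR NI, I.isModel K → I.satA ax

/-- `K ⊨ C ⊑ D`. -/
def KB.entailsSub {NC NR NI : Type} (K : KB NC NR NI) (c d : Concept NC NR) : Prop :=
  ∀ I : Interp NC NR NI, I.isModel K → c.sem I ⊆ d.sem I

end ELH

namespace ELH

/-- The individual names occurring in an assertion. -/
def Assertion.inds {NC NR NI : Type} : Assertion NC NR NI → Set NI
  | .cAssert _ y => {y}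
  | .rAssert _ y z => {y, z}

end ELH

namespace ELH

open Classical in
/-- Extend an interpretation with one fresh point interpreting `y`. -/
noncomputable def extend {NC NR NI : Type} (I : Interp NC NR NI) (y : NI) :
    Interp NC NR NI where
  Dom := I.Dom ⊕ Unit
  dom_nonempty := ⟨.inr ()⟩
  cSem A := Sum.inl '' I.cSem A ∪ {Sum.inr ()}
  rSem r := {p | ∃ a b, p = (.inl a, .inl b) ∧ (a, b) ∈ I.rSem r} ∪ {(.inr (), .inr ())}
  iSem x := if x = y then .inr () else .inl (I.iSem x)
  una := by
    intro a b hab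
    by_cases ha : a = y <;> by_cases hb : b = y
    · rw [ha, hb]
    · simp [ha, hb] at hab
    · simp [ha, hb] at hab
    · simp only [ha, hb, if_neg] at hab
      exact I.una (Sum.inl.injEq .. ▸ hab)

lemma extend_iSem_ne {NC NR NI : Type} (I : Interp NC NR NI) {y x : NI} (h : x ≠ y) :
    (extend I y).iSem x = .inl (I.iSem x) := by
  simp [extend, h]

lemma extend_sem {NC NR NI : Type} (I : Interp NC NR NI) (y : NI) (C : Concept NC NR) :
    (∀ a, Sum.inl a ∈ C.sem (extend I y) ↔ a ∈ C.sem I) ∧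
      (Sum.inr () ∈ C.sem (extend I y)) := by
  induction C with
  | top => exact ⟨fun _ => ⟨fun _ => trivial, fun _ => trivial⟩, trivial⟩
  | atom A =>
    constructor
    · intro a
      constructor
      · intro h
        rcases (h : Sum.inl a ∈ Sum.inl '' I.cSem A ∪ {Sum.inr ()}) with ⟨b, hb, he⟩ | h
        · cases he; exact hb
        · cases h
      · intro h; exact Or.inl ⟨a, h, rfl⟩
    · exact Or.inr rfl
  | inter c d ihc ihd =>
    constructor
    · intro a
      exact and_congr (ihc.1 a) (ihd.1 a)
    · exact ⟨ihc.2, ihd.2⟩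
  | ex r c ihc =>
    constructor
    · intro a
      constructor
      · rintro ⟨b, hr, hb⟩
        rcases hr with ⟨a', b', heq, hab⟩ | hr
        · obtain ⟨h1, h2⟩ := Prod.mk.injEq .. ▸ heq
          cases Sum.inl.injEq .. ▸ h1
          cases h2
          exact ⟨b', hab, (ihc.1 b').mp hb⟩
        · have h' : ((Sum.inl a : I.Dom ⊕ Unit), (b : I.Dom ⊕ Unit)) = (Sum.inr (), Sum.inr ()) := hr
          cases h'
      · rintro ⟨b, hab, hb⟩
        exact ⟨.inl b, Or.inl ⟨a, b, rfl, hab⟩, (ihc.1 b).mpr hb⟩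
    · exact ⟨.inr (), Or.inr rfl, ihc.2⟩

lemma extend_satT {NC NR NI : Type} (I : Interp NC NR NI) (y : NI)
    {ax : TAxiom NC NR} (h : I.satT ax) : (extend I y).satT ax := by
  cases ax with
  | cIncl c d =>
    rintro (a | ⟨⟩) ha
    · exact (extend_sem I y d).1 a |>.mpr (h ((extend_sem I y c).1 a |>.mp ha))
    · exact (extend_sem I y d).2
  | rIncl r s =>
    rintro p hp
    rcases hp with ⟨a, b, heq, hab⟩ | hp
    · exact Or.inl ⟨a, b, heq, h hab⟩
    · exact Or.inr hp

lemma extend_satA {NC NR NI : Type} (I : Interp NC NR NI) (y : NI)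
    {ax : Assertion NC NR NI} (hax : y ∉ ax.inds) :
    ((extend I y).satA ax ↔ I.satA ax) := by
  cases ax with
  | cAssert c x =>
    have hx : x ≠ y := by simp [Assertion.inds] at hax; exact fun h => hax h.symm
    simp only [Interp.satA, extend_iSem_ne I hx]
    exact (extend_sem I y c).1 _
  | rAssert r x z =>
    have hx : x ≠ y ∧ z ≠ y := by
      simp [Assertion.inds] at hax
      exact ⟨fun h => hax.1 h.symm, fun h => hax.2 h.symm⟩
    simp only [Interp.satA, extend_iSem_ne I hx.1, extend_iSem_ne I hx.2]
    constructor
    · rintro (⟨a, b, heq, hab⟩ | h)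
      · obtain ⟨h1, h2⟩ := Prod.mk.injEq .. ▸ heq
        cases Sum.inl.injEq .. ▸ h1
        cases Sum.inl.injEq .. ▸ h2
        exact hab
      · have h' : ((Sum.inl (I.iSem x) : I.Dom ⊕ Unit), (Sum.inl (I.iSem z) : I.Dom ⊕ Unit)) = (Sum.inr (), Sum.inr ()) := h
        cases h'
    · intro h; exact Or.inl ⟨_, _, rfl, h⟩

end ELH

open ELH in
/-- If `y` does not occur in `A`, then for every assertion `φ` not
mentioning `y`, `(T, A ∪ {B(y)}) ⊨ φ` iff `(T, A) ⊨ φ`. -/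
theorem fresh_individual_conservative {NC NR NI : Type} [Finite NC] [Finite NR] [Finite NI]
    (K : KB NC NR NI) (hT : K.tbox.Finite) (hA : K.abox.Finite)
    (y : NI) (hy : ∀ ax ∈ K.abox, y ∉ ax.inds)
    (B : Concept NC NR) (φ : Assertion NC NR NI) (hφ : y ∉ φ.inds) :
    KB.entails ⟨K.tbox, K.abox ∪ {Assertion.cAssert B y}⟩ φ ↔ K.entails φ := by
  constructor
  · intro h I hI
    have hmod : (extend I y).isModel ⟨K.tbox, K.abox ∪ {Assertion.cAssert B y}⟩ := by
      constructor
      · intro ax hax; exact extend_satT I y (hI.1 ax hax)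
      · intro ax hax
        rcases hax with hax | hax
        · exact (extend_satA I y (hy ax hax)).mpr (hI.2 ax hax)
        · simp only [Set.mem_singleton_iff] at hax
          subst hax
          show (extend I y).iSem y ∈ B.sem (extend I y)
          have : (extend I y).iSem y = .inr () := by simp [extend]
          rw [this]
          exact (extend_sem I y B).2
    exact (extend_satA I y hφ).mp (h (extend I y) hmod)
  · intro h I hI
    exact h I ⟨hI.1, fun ax hax => hI.2 ax (Set.mem_union_left _ hax)⟩
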